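/- Fix an integer n ≥ 3 and 0 < h < 1/2. If (δ,γ) solves the system at (n,h), then there exists v ∈ W_h, not identically zero, such that ∫₀¹ r^{n−1}·v'(r)² dr = (S^n + δ²)·∫₀¹ r^{n−3}·v(r)² dr; in particular μ_h^n ≤ S^n + δ². -/

import Mathlib

open MeasureTheory Real Set Filter

noncomputable section
set_option maxHeartbeats 2000000

/-- `u ∈ H¹(0,1)` with weak derivative `u'`: `u` is continuous on `[0,1]`,
`u'` is (square-)integrable on `(0,1)`, and `u(x) = u(0) + ∫₀ˣ u'`. -/
def IsH1 (u u' : ℝ → ℝ) : Prop :=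
  ContinuousOn u (Set.Icc 0 1) ∧
  IntervalIntegrable u' volume 0 1 ∧
  IntegrableOn (fun t => u' t ^ 2) (Set.Ioo 0 1) ∧
  ∀ x ∈ Set.Icc (0:ℝ) 1, u x = u 0 + ∫ t in (0:ℝ)..x, u' t

/-- `f_m(h) = (1/m)·Σ_{k=0}^{m−1} (1−h)^{2−n+k}` (for the fixed dimension `n`). -/
def fm (n m : ℕ) (h : ℝ) : ℝ :=
  (1 / (m : ℝ)) * ∑ k ∈ Finset.range m, (1 - h) ^ ((2 : ℤ) - (n : ℤ) + (k : ℤ))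

/-- `g_n(h) = f_n(h) − 2 f_{n−1}(h) + f_{n−2}(h)`. -/
def gn (n : ℕ) (h : ℝ) : ℝ := fm n n h - 2 * fm n (n - 1) h + fm n (n - 2) h

/-- `(δ,γ)` solves the system at `(n,h)`. -/
def SolvesSystem (n : ℕ) (h δ γ : ℝ) : Prop :=
  0 < δ ∧ 4 * δ ^ 2 ≤ (n : ℝ) * ((n : ℝ) - 2) ∧
  (∀ r ∈ Set.Icc h (1 - h), γ + δ * Real.log r ∈ Set.Ioo (-(π/2)) (π/2)) ∧
  (((n : ℝ) ^ 2 - 2 * (n : ℝ)) / 2 - 2 * δ ^ 2)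
      * ((n : ℝ) ^ 2 / 4 - δ ^ 2 + (n : ℝ) * δ * Real.tan (γ + δ * Real.log h))
    = (((n : ℝ) - 2) / ((n : ℝ) - 1)) * ((n : ℝ) ^ 2 / 4 + δ ^ 2) ^ 2 ∧
  ((n : ℝ) - 2) / 2 + δ * Real.tan (γ + δ * Real.log (1 - h))
    = (1 / h) * (fm n n h - gn n h * (((n : ℝ) - 2) ^ 2 / 4 + δ ^ 2))

/-- `v ∈ W_h` (with weak derivative `v'`): `v ∈ H¹(0,1)`, `v(1) = 0`, and `v` is
affine on `[0,h]` and on `[1−h,1]`. -/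
def MemWh (h : ℝ) (v v' : ℝ → ℝ) : Prop :=
  IsH1 v v' ∧ v 1 = 0 ∧
  (∃ a b : ℝ, ∀ x ∈ Set.Icc (0:ℝ) h, v x = a * x + b) ∧
  (∃ a b : ℝ, ∀ x ∈ Set.Icc (1 - h) (1:ℝ), v x = a * x + b)

/-- `μ_h^n`: the infimum of the weighted Hardy Rayleigh quotient over nonzero `v ∈ W_h`. -/
def munh (n : ℕ) (h : ℝ) : ℝ :=
  sInf { s : ℝ | ∃ v v' : ℝ → ℝ, MemWh h v v' ∧ (∃ x ∈ Set.Icc (0:ℝ) 1, v x ≠ 0) ∧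
    s = (∫ r in (0:ℝ)..1, r ^ (n - 1) * (v' r) ^ 2)
        / (∫ r in (0:ℝ)..1, r ^ (n - 3) * (v r) ^ 2) }

namespace WhAux

def θf (δ γ r : ℝ) : ℝ := γ + δ * Real.log r
def mC (n : ℕ) : ℝ := ((n:ℝ) - 2) / 2
def cC (n : ℕ) (δ : ℝ) : ℝ := ((n:ℝ) - 2)^2/4 + δ^2
def wF (n : ℕ) (δ γ r : ℝ) : ℝ := r ^ (-(mC n)) * Real.cos (θf δ γ r)
def wD (n : ℕ) (δ γ r : ℝ) : ℝ :=
  r ^ (-(mC n) - 1) * (-(mC n) * Real.cos (θf δ γ r) - δ * Real.sin (θf δ γ r))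
def FD (δ γ r : ℝ) : ℝ := Real.log r / 2 + Real.sin (2 * θf δ γ r) / (4 * δ)
def GE (n : ℕ) (δ γ r : ℝ) : ℝ :=
  cC n δ * Real.log r / 2 + (mC n ^ 2 - δ^2) * Real.sin (2 * θf δ γ r) / (4*δ)
    - (mC n / 2) * Real.cos (2 * θf δ γ r)

lemma hasDerivAt_θf {r : ℝ} (hr : 0 < r) (δ γ : ℝ) :
    HasDerivAt (θf δ γ) (δ / r) r := by
  have := ((Real.hasDerivAt_log hr.ne').const_mul δ).const_add γ
  rw [div_eq_mul_inv]; exact this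

lemma hasDerivAt_wF (n : ℕ) {r : ℝ} (hr : 0 < r) (δ γ : ℝ) :
    HasDerivAt (wF n δ γ) (wD n δ γ r) r := by
  have h1 : HasDerivAt (fun x : ℝ => x ^ (-(mC n))) ((-(mC n)) * r ^ (-(mC n) - 1)) r :=
    Real.hasDerivAt_rpow_const (Or.inl hr.ne')
  have h2 : HasDerivAt (fun x => Real.cos (θf δ γ x)) (-Real.sin (θf δ γ r) * (δ / r)) r :=
    (Real.hasDerivAt_cos (θf δ γ r)).comp r (hasDerivAt_θf hr δ γ)
  have h3 := h1.mul h2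
  refine h3.congr_deriv ?_
  have hrm : r ^ (-(mC n) - 1) = r ^ (-(mC n)) * r⁻¹ := by
    rw [← Real.rpow_neg_one r, ← Real.rpow_add hr]; ring_nf
  rw [wD, hrm]
  field_simp [hr.ne']
  ring

lemma hasDerivAt_FD {δ : ℝ} (hδ : δ ≠ 0) (γ : ℝ) {r : ℝ} (hr : 0 < r) :
    HasDerivAt (FD δ γ) (Real.cos (θf δ γ r)^2 / r) r := by
  have h2 : HasDerivAt (fun x => Real.sin (2 * θf δ γ x)) (Real.cos (2 * θf δ γ r) * (2 * (δ / r))) r :=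
    ((hasDerivAt_θf hr δ γ).const_mul 2).sin
  have h1 := ((Real.hasDerivAt_log hr.ne').div_const 2).add (h2.div_const (4 * δ))
  refine h1.congr_deriv ?_
  rw [Real.cos_sq (θf δ γ r)]
  field_simp [hr.ne']
  ring

lemma hasDerivAt_GE (n : ℕ) {δ : ℝ} (hδ : δ ≠ 0) (γ : ℝ) {r : ℝ} (hr : 0 < r) :
    HasDerivAt (GE n δ γ)
      ((mC n * Real.cos (θf δ γ r) + δ * Real.sin (θf δ γ r))^2 / r) r := by
  have hs : HasDerivAt (fun x => Real.sin (2 * θf δ γ x)) (Real.cos (2 * θf δ γ r) * (2 * (δ / r))) r :=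
    ((hasDerivAt_θf hr δ γ).const_mul 2).sin
  have hc : HasDerivAt (fun x => Real.cos (2 * θf δ γ x)) (-Real.sin (2 * θf δ γ r) * (2 * (δ / r))) r :=
    ((hasDerivAt_θf hr δ γ).const_mul 2).cos
  have h1 := ((((Real.hasDerivAt_log hr.ne').div_const 2).const_mul (cC n δ)).add
    (((hs.div_const (4*δ)).const_mul (mC n ^ 2 - δ^2)))).sub (hc.const_mul (mC n / 2))
  convert h1 using 1
  case e'_4 => rfl
  case e'_5 => rfl
  case e'_8 => ext x; simp only [GE, Pi.add_apply, Pi.sub_apply]; ring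
  have key : (mC n * Real.cos (θf δ γ r) + δ * Real.sin (θf δ γ r))^2
      = cC n δ/2 + (mC n^2 - δ^2) * Real.cos (2*θf δ γ r)/2
        + mC n * δ * Real.sin (2*θf δ γ r) := by
    rw [Real.cos_two_mul, Real.sin_two_mul, cC, mC]
    linear_combination δ^2 * Real.sin_sq_add_cos_sq (θf δ γ r)
  rw [key]
  field_simp [hr.ne']
  ring

lemma contOn_θf (δ γ : ℝ) : ContinuousOn (θf δ γ) (Set.Ioi 0) := by
  apply continuousOn_const.add (continuousOn_const.mul (Real.continuousOn_log.mono ?_))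
  intro x hx; exact ne_of_gt hx

lemma contOn_rpow (a : ℝ) : ContinuousOn (fun x : ℝ => x ^ a) (Set.Ioi 0) := fun x hx =>
  (Real.continuousAt_rpow_const x a (Or.inl (ne_of_gt hx))).continuousWithinAt

lemma contOn_wF (n : ℕ) (δ γ : ℝ) : ContinuousOn (wF n δ γ) (Set.Ioi 0) :=
  (contOn_rpow _).mul (Real.continuous_cos.comp_continuousOn (contOn_θf δ γ))

lemma contOn_wD (n : ℕ) (δ γ : ℝ) : ContinuousOn (wD n δ γ) (Set.Ioi 0) :=
  (contOn_rpow _).mul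
    ((continuousOn_const.mul (Real.continuous_cos.comp_continuousOn (contOn_θf δ γ))).sub
      (continuousOn_const.mul (Real.continuous_sin.comp_continuousOn (contOn_θf δ γ))))

lemma integrand_D {n : ℕ} (hn : 3 ≤ n) (δ γ : ℝ) {r : ℝ} (hr : 0 < r) :
    (r:ℝ) ^ (n-3) * (wF n δ γ r)^2 = Real.cos (θf δ γ r)^2 / r := by
  have h2 : (r:ℝ) ^ (n-3 : ℕ) = r ^ ((n:ℝ) - 3) := by
    rw [← Real.rpow_natCast]
    congr 1
    rw [Nat.cast_sub (by omega)]
    norm_num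
  rw [wF, mul_pow, h2, sq (r ^ (-(mC n))), ← Real.rpow_add hr, ← mul_assoc,
    ← Real.rpow_add hr]
  have : (n:ℝ) - 3 + (-(mC n) + -(mC n)) = -1 := by rw [mC]; ring
  rw [this, Real.rpow_neg_one]
  ring

lemma integrand_N {n : ℕ} (hn : 3 ≤ n) (δ γ : ℝ) {r : ℝ} (hr : 0 < r) :
    (r:ℝ) ^ (n-1) * (wD n δ γ r)^2
      = (mC n * Real.cos (θf δ γ r) + δ * Real.sin (θf δ γ r))^2 / r := by
  have h2 : (r:ℝ) ^ (n-1 : ℕ) = r ^ ((n:ℝ) - 1) := by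
    rw [← Real.rpow_natCast]
    congr 1
    rw [Nat.cast_sub (by omega)]
    norm_num
  rw [wD, mul_pow, h2, sq (r ^ (-(mC n) - 1)), ← Real.rpow_add hr, ← mul_assoc,
    ← Real.rpow_add hr]
  have : (n:ℝ) - 1 + (-(mC n) - 1 + (-(mC n) - 1)) = -1 := by rw [mC]; ring
  rw [this, Real.rpow_neg_one]
  have h4 : (-(mC n) * Real.cos (θf δ γ r) - δ * Real.sin (θf δ γ r))^2
      = (mC n * Real.cos (θf δ γ r) + δ * Real.sin (θf δ γ r))^2 := by ring
  rw [← h4]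
  ring

lemma II_congr {f g : ℝ → ℝ} {p q : ℝ} (hpq : p ≤ q)
    (hg : IntervalIntegrable g volume p q) (hfg : ∀ r ∈ Set.Ioc p q, f r = g r) :
    IntervalIntegrable f volume p q := by
  rw [intervalIntegrable_iff, uIoc_of_le hpq]
  rw [intervalIntegrable_iff, uIoc_of_le hpq] at hg
  exact hg.congr_fun (fun r hr => (hfg r hr).symm) measurableSet_Ioc

lemma int_congr {f g : ℝ → ℝ} {p q : ℝ} (hpq : p ≤ q)
    (hfg : ∀ r ∈ Set.Ioc p q, f r = g r) :
    ∫ r in p..q, f r = ∫ r in p..q, g r :=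
  intervalIntegral.integral_congr_ae
    (MeasureTheory.ae_of_all _ (fun x hx => hfg x (by rwa [uIoc_of_le hpq] at hx)))

lemma integral_pow_const (k : ℕ) (p q A : ℝ) :
    ∫ r in p..q, (r:ℝ)^k * A = A * (q^(k+1) - p^(k+1))/((k:ℝ)+1) := by
  rw [intervalIntegral.integral_mul_const, integral_pow]
  ring

lemma integral_affine (j : ℕ) (p q A B : ℝ) :
    ∫ r in p..q, (r:ℝ)^j * (A*r+B)^2
      = A^2*(q^(j+3)-p^(j+3))/((j:ℝ)+3) + 2*A*B*(q^(j+2)-p^(j+2))/((j:ℝ)+2)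
        + B^2*(q^(j+1)-p^(j+1))/((j:ℝ)+1) := by
  have h : ∀ r ∈ Set.uIcc p q, (fun r : ℝ => r^j * (A*r+B)^2) r
      = (fun r : ℝ => A^2*r^(j+2) + 2*A*B*r^(j+1) + B^2*r^j) r := by
    intro r _; simp only; ring
  rw [intervalIntegral.integral_congr h, intervalIntegral.integral_add, intervalIntegral.integral_add,
    intervalIntegral.integral_const_mul, intervalIntegral.integral_const_mul,
    intervalIntegral.integral_const_mul, integral_pow, integral_pow, integral_pow]
  · push_cast; ring
  · exact (continuous_const.mul (continuous_pow _)).intervalIntegrable _ _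
  · exact (continuous_const.mul (continuous_pow _)).intervalIntegrable _ _
  · exact ((continuous_const.mul (continuous_pow _)).add (continuous_const.mul (continuous_pow _))).intervalIntegrable _ _
  · exact (continuous_const.mul (continuous_pow _)).intervalIntegrable _ _

lemma contOn_intD (δ γ : ℝ) :
    ContinuousOn (fun r => Real.cos (θf δ γ r)^2 / r) (Set.Ioi 0) :=
  ((Real.continuous_cos.comp_continuousOn (contOn_θf δ γ)).pow 2).div
    continuousOn_id (fun x hx => ne_of_gt hx)

lemma contOn_intN (n : ℕ) (δ γ : ℝ) :
    ContinuousOn (fun r => (mC n * Real.cos (θf δ γ r) + δ * Real.sin (θf δ γ r))^2 / r)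
      (Set.Ioi 0) :=
  (((continuousOn_const.mul (Real.continuous_cos.comp_continuousOn (contOn_θf δ γ))).add
    (continuousOn_const.mul (Real.continuous_sin.comp_continuousOn (contOn_θf δ γ)))).pow 2).div
    continuousOn_id (fun x hx => ne_of_gt hx)

lemma uIcc_sub_Ioi {p q : ℝ} (hp : 0 < p) (hpq : p ≤ q) : Set.uIcc p q ⊆ Set.Ioi 0 := by
  rw [uIcc_of_le hpq]
  intro x hx
  exact lt_of_lt_of_le hp hx.1

lemma integral_mid_D (n : ℕ) (hn : 3 ≤ n) {δ : ℝ} (hδ : δ ≠ 0) (γ : ℝ) {p q : ℝ}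
    (hp : 0 < p) (hpq : p ≤ q) :
    ∫ r in p..q, (r:ℝ)^(n-3) * (wF n δ γ r)^2 = FD δ γ q - FD δ γ p := by
  rw [int_congr hpq (g := fun r => Real.cos (θf δ γ r)^2 / r)
    (fun r hr => integrand_D hn δ γ (lt_trans hp hr.1))]
  apply intervalIntegral.integral_eq_sub_of_hasDerivAt
  · intro x hx
    exact hasDerivAt_FD hδ γ (uIcc_sub_Ioi hp hpq hx)
  · exact ((contOn_intD δ γ).mono (uIcc_sub_Ioi hp hpq)).intervalIntegrable

lemma integral_mid_N (n : ℕ) (hn : 3 ≤ n) {δ : ℝ} (hδ : δ ≠ 0) (γ : ℝ) {p q : ℝ}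
    (hp : 0 < p) (hpq : p ≤ q) :
    ∫ r in p..q, (r:ℝ)^(n-1) * (wD n δ γ r)^2 = GE n δ γ q - GE n δ γ p := by
  rw [int_congr hpq
    (g := fun r => (mC n * Real.cos (θf δ γ r) + δ * Real.sin (θf δ γ r))^2 / r)
    (fun r hr => integrand_N hn δ γ (lt_trans hp hr.1))]
  apply intervalIntegral.integral_eq_sub_of_hasDerivAt
  · intro x hx
    exact hasDerivAt_GE n hδ γ (uIcc_sub_Ioi hp hpq hx)
  · exact ((contOn_intN n δ γ).mono (uIcc_sub_Ioi hp hpq)).intervalIntegrable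

lemma GEFD (n : ℕ) {δ : ℝ} (hδ : δ ≠ 0) (γ r : ℝ) :
    GE n δ γ r - cC n δ * FD δ γ r
      = -(δ * (Real.sin (θf δ γ r) * Real.cos (θf δ γ r)))
        - mC n * Real.cos (θf δ γ r)^2 + mC n / 2 := by
  rw [GE, FD, cC, mC, Real.sin_two_mul, Real.cos_two_mul]
  field_simp
  ring

lemma key1 (x δ t : ℝ) (h3 : (3:ℝ) ≤ x) (hδ : δ ≠ 0)
    (hK : (x^2 - 2*x)/2 - 2*δ^2 ≠ 0)
    (heq : ((x^2 - 2*x)/2 - 2*δ^2) * (x^2/4 - δ^2 + x*δ*t) = ((x-2)/(x-1))*(x^2/4+δ^2)^2) :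
    (-x*((x-2)^2/4 + δ^2)/((x^2 - 2*x)/2 - 2*δ^2))^2/x
      - ((x-2)^2/4 + δ^2)*((-x*((x-2)^2/4 + δ^2)/((x^2 - 2*x)/2 - 2*δ^2))^2/x
        + 2*(-x*((x-2)^2/4 + δ^2)/((x^2 - 2*x)/2 - 2*δ^2))
            *(1-(-x*((x-2)^2/4 + δ^2)/((x^2 - 2*x)/2 - 2*δ^2)))/(x-1)
        + (1-(-x*((x-2)^2/4 + δ^2)/((x^2 - 2*x)/2 - 2*δ^2)))^2/(x-2))
      + (x-2)/2 + δ*t = 0 := by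
  have hx0 : x ≠ 0 := by intro hh; rw [hh] at h3; norm_num at h3
  have hx1 : x - 1 ≠ 0 := by intro hh; linarith
  have hx2 : x - 2 ≠ 0 := by intro hh; linarith
  set K : ℝ := (x^2 - 2*x)/2 - 2*δ^2 with hKdef
  field_simp at heq
  have ht : δ*t = ((x-2)*(x^2/4+δ^2)^2/((x-1)*K) + δ^2 - x^2/4)/x := by
    field_simp
    linear_combination heq
  rw [ht]
  field_simp
  rw [hKdef]
  ring

lemma key1' (x δ t c s K : ℝ) (h3 : (3:ℝ) ≤ x) (hδ : δ ≠ 0)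
    (hc : c = (x-2)^2/4 + δ^2) (hKd : K = (x^2 - 2*x)/2 - 2*δ^2) (hK : K ≠ 0)
    (hs : s = -x*c/K)
    (heq : K * (x^2/4 - δ^2 + x*δ*t) = ((x-2)/(x-1))*(x^2/4+δ^2)^2) :
    s^2/x - c*(s^2/x + 2*s*(1-s)/(x-1) + (1-s)^2/(x-2)) + (x-2)/2 + δ*t = 0 := by
  subst hc hKd hs
  exact key1 x δ t h3 hδ hK heq

lemma fm_pow (n m : ℕ) (hn : 2 ≤ n) (hm : 0 < m) {h : ℝ} (h0 : 0 < h) (h1 : h < 1) :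
    (1 - (1-h)^m)/(m:ℝ) = h * (1-h)^(n-2 : ℕ) * fm n m h := by
  have hb : (1:ℝ) - h ≠ 0 := by linarith
  have hb1 : (1:ℝ) - h ≠ 1 := by intro hh; linarith [hh.ge, hh.le]
  have hsum : ∑ k ∈ Finset.range m, ((1:ℝ) - h) ^ ((2 : ℤ) - (n : ℤ) + (k : ℤ))
      = (1-h)^((2:ℤ) - n) * (((1-h)^m - 1)/((1-h) - 1)) := by
    rw [← geom_sum_eq hb1, Finset.mul_sum]
    apply Finset.sum_congr rfl
    intro k _
    rw [zpow_add₀ hb, zpow_natCast]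
  have hQ : ((1:ℝ)-h)^(n-2 : ℕ) * (1-h)^((2:ℤ) - n) = 1 := by
    rw [← zpow_natCast (1-h) (n-2), ← zpow_add₀ hb]
    have h5 : ((n - 2 : ℕ) : ℤ) + ((2:ℤ) - n) = 0 := by
      have : ((n - 2 : ℕ) : ℤ) = (n : ℤ) - 2 := by omega
      omega
    rw [h5, zpow_zero]
  rw [fm, hsum]
  have hm' : (m:ℝ) ≠ 0 := Nat.cast_ne_zero.mpr hm.ne'
  field_simp
  linear_combination (h*(1 - (1-h)^m)) * hQ

end WhAux


/-- If `(δ,γ)` solves the system at `(n,h)`, then there is a nonzero `v ∈ W_h` with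
`∫₀¹ r^{n−1} v'² = (S^n + δ²)·∫₀¹ r^{n−3} v²`; in particular `μ_h^n ≤ S^n + δ²`. -/
theorem Wh_hardy_upper_bound (n : ℕ) (hn : 3 ≤ n) (h δ γ : ℝ) (hh0 : 0 < h) (hh1 : h < 1/2)
    (hsol : SolvesSystem n h δ γ) :
    (∃ v v' : ℝ → ℝ, MemWh h v v' ∧ (∃ x ∈ Set.Icc (0:ℝ) 1, v x ≠ 0) ∧
      (∫ r in (0:ℝ)..1, r ^ (n - 1) * (v' r) ^ 2)
        = (((n : ℝ) - 2) ^ 2 / 4 + δ ^ 2) * ∫ r in (0:ℝ)..1, r ^ (n - 3) * (v r) ^ 2) ∧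
    munh n h ≤ ((n : ℝ) - 2) ^ 2 / 4 + δ ^ 2 := by
  obtain ⟨hδpos, hδbound, hrange, heq1, heq2⟩ := hsol
  have hδ : δ ≠ 0 := ne_of_gt hδpos
  have hn3 : (3:ℝ) ≤ (n:ℝ) := by exact_mod_cast hn
  have hnR : (n:ℝ) ≠ 0 := by positivity
  have hn1R : (n:ℝ) - 1 ≠ 0 := by intro hh; linarith
  have hn2R : (n:ℝ) - 2 ≠ 0 := by intro hh; linarith
  have hh1' : h < 1 - h := by linarith
  have hhle : h ≤ 1 - h := le_of_lt hh1'
  have h1h0 : 0 < 1 - h := by linarith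
  have h0le : (0:ℝ) ≤ h := le_of_lt hh0
  have h1hle1 : 1 - h ≤ (1:ℝ) := by linarith
  have hhne : h ≠ 0 := ne_of_gt hh0
  -- cosines positive
  have hC0 : 0 < Real.cos (γ + δ * Real.log h) :=
    Real.cos_pos_of_mem_Ioo (hrange h ⟨le_refl h, hhle⟩)
  have hC1 : 0 < Real.cos (γ + δ * Real.log (1-h)) :=
    Real.cos_pos_of_mem_Ioo (hrange (1-h) ⟨hhle, le_refl _⟩)
  obtain ⟨c, hcdef⟩ : ∃ x : ℝ, x = ((n:ℝ) - 2)^2/4 + δ^2 := ⟨_, rfl⟩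
  obtain ⟨K, hKdef⟩ : ∃ x : ℝ, x = ((n:ℝ)^2 - 2*(n:ℝ))/2 - 2*δ^2 := ⟨_, rfl⟩
  rw [← hcdef] at heq2 ⊢
  rw [← hKdef] at heq1
  have hKnz : K ≠ 0 := by
    intro hzero
    rw [hzero, zero_mul] at heq1
    have hpos2 : 0 < (((n:ℝ) - 2)/((n:ℝ) - 1)) * (((n:ℝ)^2/4 + δ^2)^2) := by
      apply mul_pos (div_pos (by linarith) (by linarith))
      have : 0 < δ^2 := by positivity
      nlinarith
    linarith
  obtain ⟨s₀, hs0def⟩ : ∃ x : ℝ, x = -(n:ℝ)*c/K := ⟨_, rfl⟩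
  obtain ⟨R0, hR0def⟩ : ∃ x : ℝ, x = h ^ (-(WhAux.mC n)) * Real.cos (γ + δ * Real.log h) := ⟨_, rfl⟩
  obtain ⟨R1, hR1def⟩ : ∃ x : ℝ, x = (1-h) ^ (-(WhAux.mC n)) * Real.cos (γ + δ * Real.log (1-h)) := ⟨_, rfl⟩
  obtain ⟨a, hadef⟩ : ∃ x : ℝ, x = s₀ * R0 / h := ⟨_, rfl⟩
  obtain ⟨b, hbdef⟩ : ∃ x : ℝ, x = R0 - a*h := ⟨_, rfl⟩
  obtain ⟨a₁, ha1def⟩ : ∃ x : ℝ, x = -(R1/h) := ⟨_, rfl⟩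
  obtain ⟨b₁, hb1def⟩ : ∃ x : ℝ, x = R1/h := ⟨_, rfl⟩
  have hR0w : R0 = WhAux.wF n δ γ h := by rw [hR0def, WhAux.wF, WhAux.θf]
  have hR1w : R1 = WhAux.wF n δ γ (1-h) := by rw [hR1def, WhAux.wF, WhAux.θf]
  obtain ⟨v, hvdef⟩ : ∃ f : ℝ → ℝ, f = fun r =>
    (if r ≤ h then a*r + b else if r ≤ 1-h then WhAux.wF n δ γ r else a₁*r + b₁) := ⟨_, rfl⟩
  obtain ⟨v', hv'def⟩ : ∃ f : ℝ → ℝ, f = fun r =>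
    (if r ≤ h then a else if r ≤ 1-h then WhAux.wD n δ γ r else a₁) := ⟨_, rfl⟩
  -- pointwise descriptions
  have hv_left : ∀ r : ℝ, r ≤ h → v r = a*r + b := by
    intro r hr; simp only [hvdef]; rw [if_pos hr]
  have hv_mid : ∀ r : ℝ, h < r → r ≤ 1-h → v r = WhAux.wF n δ γ r := by
    intro r h1 h2; simp only [hvdef]; rw [if_neg (not_le.mpr h1), if_pos h2]
  have hv_right : ∀ r : ℝ, 1-h < r → v r = a₁*r + b₁ := by
    intro r h1; simp only [hvdef]
    rw [if_neg (not_le.mpr (lt_trans hh1' h1)), if_neg (not_le.mpr h1)]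
  have hv'_left : ∀ r : ℝ, r ≤ h → v' r = a := by
    intro r hr; simp only [hv'def]; rw [if_pos hr]
  have hv'_mid : ∀ r : ℝ, h < r → r ≤ 1-h → v' r = WhAux.wD n δ γ r := by
    intro r h1 h2; simp only [hv'def]; rw [if_neg (not_le.mpr h1), if_pos h2]
  have hv'_right : ∀ r : ℝ, 1-h < r → v' r = a₁ := by
    intro r h1; simp only [hv'def]
    rw [if_neg (not_le.mpr (lt_trans hh1' h1)), if_neg (not_le.mpr h1)]
  have hmatch1 : a*h + b = WhAux.wF n δ γ h := by rw [hbdef, hR0w]; ring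
  have hmatch2 : a₁*(1-h) + b₁ = WhAux.wF n δ γ (1-h) := by
    rw [ha1def, hb1def, ← hR1w]; field_simp; ring
  -- integrability of v' pieces
  have hIv'1 : IntervalIntegrable v' volume 0 h :=
    WhAux.II_congr h0le (intervalIntegrable_const (c := a))
      (fun r hr => hv'_left r hr.2)
  have hIv'2 : IntervalIntegrable v' volume h (1-h) :=
    WhAux.II_congr hhle
      (((WhAux.contOn_wD n δ γ).mono (WhAux.uIcc_sub_Ioi hh0 hhle)).intervalIntegrable)
      (fun r hr => hv'_mid r hr.1 hr.2)
  have hIv'3 : IntervalIntegrable v' volume (1-h) 1 :=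
    WhAux.II_congr h1hle1 (intervalIntegrable_const (c := a₁))
      (fun r hr => hv'_right r hr.1)
  have hIv'01 : IntervalIntegrable v' volume 0 1 := (hIv'1.trans hIv'2).trans hIv'3
  -- integrability of the weighted energy integrand
  have hIN1 : IntervalIntegrable (fun r => r ^ (n-1) * (v' r)^2) volume 0 h :=
    WhAux.II_congr h0le
      (((continuous_pow (n-1)).mul continuous_const).intervalIntegrable _ _)
      (fun r hr => by rw [hv'_left r hr.2]; rfl)
  have hIN2 : IntervalIntegrable (fun r => r ^ (n-1) * (v' r)^2) volume h (1-h) :=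
    WhAux.II_congr hhle
      (((continuous_pow (n-1)).continuousOn.mul
        (((WhAux.contOn_wD n δ γ).mono (WhAux.uIcc_sub_Ioi hh0 hhle)).pow 2)).intervalIntegrable)
      (fun r hr => by rw [hv'_mid r hr.1 hr.2]; rfl)
  have hIN3 : IntervalIntegrable (fun r => r ^ (n-1) * (v' r)^2) volume (1-h) 1 :=
    WhAux.II_congr h1hle1
      (((continuous_pow (n-1)).mul continuous_const).intervalIntegrable _ _)
      (fun r hr => by rw [hv'_right r hr.1]; rfl)
  have haffC : Continuous (fun r : ℝ => a*r + b) :=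
    (continuous_const.mul continuous_id').add continuous_const
  have haffC1 : Continuous (fun r : ℝ => a₁*r + b₁) :=
    (continuous_const.mul continuous_id').add continuous_const
  have hID1 : IntervalIntegrable (fun r => r ^ (n-3) * (v r)^2) volume 0 h :=
    WhAux.II_congr h0le
      (((continuous_pow (n-3)).mul (haffC.pow 2)).intervalIntegrable _ _)
      (fun r hr => by rw [hv_left r hr.2]; rfl)
  have hID2 : IntervalIntegrable (fun r => r ^ (n-3) * (v r)^2) volume h (1-h) :=
    WhAux.II_congr hhle
      (((continuous_pow (n-3)).continuousOn.mul
        (((WhAux.contOn_wF n δ γ).mono (WhAux.uIcc_sub_Ioi hh0 hhle)).pow 2)).intervalIntegrable)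
      (fun r hr => by rw [hv_mid r hr.1 hr.2]; rfl)
  have hID3 : IntervalIntegrable (fun r => r ^ (n-3) * (v r)^2) volume (1-h) 1 :=
    WhAux.II_congr h1hle1
      (((continuous_pow (n-3)).mul (haffC1.pow 2)).intervalIntegrable _ _)
      (fun r hr => by rw [hv_right r hr.1]; rfl)
  -- splittings
  have hNsplit : (∫ r in (0:ℝ)..1, r ^ (n-1) * (v' r)^2)
      = (∫ r in (0:ℝ)..h, r ^ (n-1) * (v' r)^2) + (∫ r in h..(1-h), r ^ (n-1) * (v' r)^2)
        + (∫ r in (1-h)..1, r ^ (n-1) * (v' r)^2) := by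
    have e1 := intervalIntegral.integral_add_adjacent_intervals hIN1 hIN2
    have e2 := intervalIntegral.integral_add_adjacent_intervals (hIN1.trans hIN2) hIN3
    linarith
  have hDsplit : (∫ r in (0:ℝ)..1, r ^ (n-3) * (v r)^2)
      = (∫ r in (0:ℝ)..h, r ^ (n-3) * (v r)^2) + (∫ r in h..(1-h), r ^ (n-3) * (v r)^2)
        + (∫ r in (1-h)..1, r ^ (n-3) * (v r)^2) := by
    have e1 := intervalIntegral.integral_add_adjacent_intervals hID1 hID2
    have e2 := intervalIntegral.integral_add_adjacent_intervals (hID1.trans hID2) hID3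
    linarith
  -- values of the six integrals
  have hNL : (∫ r in (0:ℝ)..h, r ^ (n-1) * (v' r)^2) = a^2 * h^n / (n:ℝ) := by
    rw [WhAux.int_congr h0le (g := fun r => r ^ (n-1) * a^2)
      (fun r hr => by rw [hv'_left r hr.2]), WhAux.integral_pow_const]
    have e1 : n - 1 + 1 = n := by omega
    rw [e1, zero_pow (by omega : n ≠ 0), Nat.cast_sub (by omega : 1 ≤ n), Nat.cast_one]
    ring
  have hNM : (∫ r in h..(1-h), r ^ (n-1) * (v' r)^2)
      = WhAux.GE n δ γ (1-h) - WhAux.GE n δ γ h := by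
    rw [WhAux.int_congr hhle (g := fun r => r ^ (n-1) * (WhAux.wD n δ γ r)^2)
      (fun r hr => by rw [hv'_mid r hr.1 hr.2])]
    exact WhAux.integral_mid_N n hn hδ γ hh0 hhle
  have hNR : (∫ r in (1-h)..1, r ^ (n-1) * (v' r)^2) = a₁^2 * (1 - (1-h)^n) / (n:ℝ) := by
    rw [WhAux.int_congr h1hle1 (g := fun r => r ^ (n-1) * a₁^2)
      (fun r hr => by rw [hv'_right r hr.1]), WhAux.integral_pow_const]
    have e1 : n - 1 + 1 = n := by omega
    rw [e1, one_pow, Nat.cast_sub (by omega : 1 ≤ n), Nat.cast_one]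
    ring
  have hDL : (∫ r in (0:ℝ)..h, r ^ (n-3) * (v r)^2)
      = a^2 * h^n / (n:ℝ) + 2*a*b * h^(n-1) / ((n:ℝ)-1) + b^2 * h^(n-2) / ((n:ℝ)-2) := by
    rw [WhAux.int_congr h0le (g := fun r => r ^ (n-3) * (a*r+b)^2)
      (fun r hr => by rw [hv_left r hr.2]), WhAux.integral_affine]
    have e1 : n - 3 + 3 = n := by omega
    have e2 : n - 3 + 2 = n - 1 := by omega
    have e3 : n - 3 + 1 = n - 2 := by omega
    rw [e1, e2, e3, zero_pow (by omega : n ≠ 0), zero_pow (by omega : n - 1 ≠ 0),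
      zero_pow (by omega : n - 2 ≠ 0), Nat.cast_sub (by omega : 3 ≤ n)]
    push_cast
    ring
  have hDM : (∫ r in h..(1-h), r ^ (n-3) * (v r)^2)
      = WhAux.FD δ γ (1-h) - WhAux.FD δ γ h := by
    rw [WhAux.int_congr hhle (g := fun r => r ^ (n-3) * (WhAux.wF n δ γ r)^2)
      (fun r hr => by rw [hv_mid r hr.1 hr.2])]
    exact WhAux.integral_mid_D n hn hδ γ hh0 hhle
  have hDR : (∫ r in (1-h)..1, r ^ (n-3) * (v r)^2)
      = a₁^2 * (1 - (1-h)^n) / (n:ℝ) + 2*a₁*b₁ * (1 - (1-h)^(n-1)) / ((n:ℝ)-1)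
        + b₁^2 * (1 - (1-h)^(n-2)) / ((n:ℝ)-2) := by
    rw [WhAux.int_congr h1hle1 (g := fun r => r ^ (n-3) * (a₁*r+b₁)^2)
      (fun r hr => by rw [hv_right r hr.1]), WhAux.integral_affine]
    have e1 : n - 3 + 3 = n := by omega
    have e2 : n - 3 + 2 = n - 1 := by omega
    have e3 : n - 3 + 1 = n - 2 := by omega
    rw [e1, e2, e3, one_pow, one_pow, one_pow, Nat.cast_sub (by omega : 3 ≤ n)]
    push_cast
    ring
  -- power juggling
  have hp1 : (h:ℝ)^n = h^(n-2) * h^2 := by rw [← pow_add]; congr 1; omega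
  have hp2 : (h:ℝ)^(n-1) = h^(n-2) * h := by rw [← pow_succ]; congr 1; omega
  have hq1 : ((1-h):ℝ)^n = (1-h)^(n-2) * (1-h)^2 := by rw [← pow_add]; congr 1; omega
  have hq2 : ((1-h):ℝ)^(n-1) = (1-h)^(n-2) * (1-h) := by rw [← pow_succ]; congr 1; omega
  have hrp0 : ((h:ℝ) ^ (-(WhAux.mC n)))^2 * h^(n-2) = 1 := by
    have e0 : -(WhAux.mC n) + -(WhAux.mC n) + ((n-2 : ℕ):ℝ) = 0 := by
      rw [WhAux.mC, Nat.cast_sub (by omega : 2 ≤ n)]; push_cast; ring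
    calc ((h:ℝ) ^ (-(WhAux.mC n)))^2 * h^(n-2)
        = h ^ (-(WhAux.mC n) + -(WhAux.mC n) + ((n-2 : ℕ):ℝ)) := by
          rw [sq, ← Real.rpow_natCast h (n-2), ← Real.rpow_add hh0, ← Real.rpow_add hh0]
      _ = h ^ (0:ℝ) := by rw [e0]
      _ = 1 := Real.rpow_zero h
  have hrp1 : (((1-h):ℝ) ^ (-(WhAux.mC n)))^2 * (1-h)^(n-2) = 1 := by
    have e0 : -(WhAux.mC n) + -(WhAux.mC n) + ((n-2 : ℕ):ℝ) = 0 := by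
      rw [WhAux.mC, Nat.cast_sub (by omega : 2 ≤ n)]; push_cast; ring
    calc (((1-h):ℝ) ^ (-(WhAux.mC n)))^2 * (1-h)^(n-2)
        = (1-h) ^ (-(WhAux.mC n) + -(WhAux.mC n) + ((n-2 : ℕ):ℝ)) := by
          rw [sq, ← Real.rpow_natCast (1-h) (n-2), ← Real.rpow_add h1h0, ← Real.rpow_add h1h0]
      _ = (1-h) ^ (0:ℝ) := by rw [e0]
      _ = 1 := Real.rpow_zero (1-h)
  have hR0sq : R0^2 * h^(n-2) = Real.cos (γ + δ * Real.log h)^2 := by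
    rw [hR0def, mul_pow]
    linear_combination (Real.cos (γ + δ * Real.log h))^2 * hrp0
  have hR1sq : R1^2 * (1-h)^(n-2) = Real.cos (γ + δ * Real.log (1-h))^2 := by
    rw [hR1def, mul_pow]
    linear_combination (Real.cos (γ + δ * Real.log (1-h)))^2 * hrp1
  have ha' : a*h = s₀*R0 := by rw [hadef]; field_simp
  have hb' : b = (1-s₀)*R0 := by rw [hbdef, hadef]; field_simp
  -- the left-end identity (uses the first equation of the system)
  have hbr := WhAux.key1' (n:ℝ) δ (Real.tan (γ + δ * Real.log h)) c s₀ K hn3 hδ hcdef hKdef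
    hKnz hs0def heq1
  rw [Real.tan_eq_sin_div_cos] at hbr
  have eqL : a^2 * h^n / (n:ℝ)
      - c * (a^2 * h^n / (n:ℝ) + 2*a*b * h^(n-1) / ((n:ℝ)-1) + b^2 * h^(n-2) / ((n:ℝ)-2))
      = -(((n:ℝ)-2)/2 * Real.cos (γ + δ * Real.log h)^2
          + δ * (Real.sin (γ + δ * Real.log h) * Real.cos (γ + δ * Real.log h))) := by
    have ea : a^2 * h^n = s₀^2 * Real.cos (γ + δ * Real.log h)^2 := by
      calc a^2 * h^n = (a*h)^2 * h^(n-2) := by rw [hp1]; ring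
        _ = s₀^2 * (R0^2 * h^(n-2)) := by rw [ha']; ring
        _ = s₀^2 * Real.cos (γ + δ * Real.log h)^2 := by rw [hR0sq]
    have eb : 2*a*b * h^(n-1) = 2*s₀*(1-s₀) * Real.cos (γ + δ * Real.log h)^2 := by
      calc 2*a*b * h^(n-1) = 2*(a*h)*b * h^(n-2) := by rw [hp2]; ring
        _ = 2*s₀*(1-s₀) * (R0^2 * h^(n-2)) := by rw [ha', hb']; ring
        _ = 2*s₀*(1-s₀) * Real.cos (γ + δ * Real.log h)^2 := by rw [hR0sq]
    have ec : b^2 * h^(n-2) = (1-s₀)^2 * Real.cos (γ + δ * Real.log h)^2 := by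
      calc b^2 * h^(n-2) = (1-s₀)^2 * (R0^2 * h^(n-2)) := by rw [hb']; ring
        _ = (1-s₀)^2 * Real.cos (γ + δ * Real.log h)^2 := by rw [hR0sq]
    rw [ea, eb, ec]
    have hbr2 : s₀^2/(n:ℝ) - c*(s₀^2/(n:ℝ) + 2*s₀*(1-s₀)/((n:ℝ)-1) + (1-s₀)^2/((n:ℝ)-2))
        = -(((n:ℝ)-2)/2)
          - δ * (Real.sin (γ + δ * Real.log h) / Real.cos (γ + δ * Real.log h)) := by
      linear_combination hbr
    calc s₀^2 * Real.cos (γ + δ * Real.log h)^2 / (n:ℝ)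
          - c * (s₀^2 * Real.cos (γ + δ * Real.log h)^2 / (n:ℝ)
            + 2*s₀*(1-s₀) * Real.cos (γ + δ * Real.log h)^2 / ((n:ℝ)-1)
            + (1-s₀)^2 * Real.cos (γ + δ * Real.log h)^2 / ((n:ℝ)-2))
        = Real.cos (γ + δ * Real.log h)^2
          * (s₀^2/(n:ℝ) - c*(s₀^2/(n:ℝ) + 2*s₀*(1-s₀)/((n:ℝ)-1) + (1-s₀)^2/((n:ℝ)-2))) := by
          ring
      _ = Real.cos (γ + δ * Real.log h)^2
          * (-(((n:ℝ)-2)/2)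
            - δ * (Real.sin (γ + δ * Real.log h) / Real.cos (γ + δ * Real.log h))) := by
          rw [hbr2]
      _ = -(((n:ℝ)-2)/2 * Real.cos (γ + δ * Real.log h)^2
          + δ * (Real.sin (γ + δ * Real.log h) * Real.cos (γ + δ * Real.log h))) := by
          field_simp
          ring
  -- the middle identity (integration by parts via explicit antiderivatives)
  have eqM : (WhAux.GE n δ γ (1-h) - WhAux.GE n δ γ h)
      - c * (WhAux.FD δ γ (1-h) - WhAux.FD δ γ h)
      = (((n:ℝ)-2)/2 * Real.cos (γ + δ * Real.log h)^2
          + δ * (Real.sin (γ + δ * Real.log h) * Real.cos (γ + δ * Real.log h)))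
        - (((n:ℝ)-2)/2 * Real.cos (γ + δ * Real.log (1-h))^2
          + δ * (Real.sin (γ + δ * Real.log (1-h)) * Real.cos (γ + δ * Real.log (1-h)))) := by
    have g0 := WhAux.GEFD n hδ γ h
    have g1 := WhAux.GEFD n hδ γ (1-h)
    simp only [WhAux.mC, WhAux.θf, WhAux.cC] at g0 g1
    rw [← hcdef] at g0 g1
    linear_combination g1 - g0
  -- the right-end identity (uses the second equation of the system)
  have hf1 : (1 - (1-h)^n)/((n:ℝ)) = h * (1-h)^(n-2) * fm n n h :=
    WhAux.fm_pow n n (by omega) (by omega) hh0 (by linarith)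
  have hf2 : (1 - (1-h)^(n-1))/((n:ℝ)-1) = h * (1-h)^(n-2) * fm n (n-1) h := by
    have e := WhAux.fm_pow n (n-1) (by omega) (by omega) hh0 (by linarith)
    rwa [Nat.cast_sub (by omega : 1 ≤ n), Nat.cast_one] at e
  have hf3 : (1 - (1-h)^(n-2))/((n:ℝ)-2) = h * (1-h)^(n-2) * fm n (n-2) h := by
    have e := WhAux.fm_pow n (n-2) (by omega) (by omega) hh0 (by linarith)
    rwa [Nat.cast_sub (by omega : 2 ≤ n), Nat.cast_ofNat] at e
  have heq2' : fm n n h - c * gn n h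
      = h * (((n:ℝ)-2)/2
          + δ * (Real.sin (γ + δ * Real.log (1-h)) / Real.cos (γ + δ * Real.log (1-h)))) := by
    rw [Real.tan_eq_sin_div_cos] at heq2
    field_simp at heq2 ⊢
    linear_combination -heq2
  have eqR : a₁^2 * (1 - (1-h)^n) / (n:ℝ)
      - c * (a₁^2 * (1 - (1-h)^n) / (n:ℝ) + 2*a₁*b₁ * (1 - (1-h)^(n-1)) / ((n:ℝ)-1)
        + b₁^2 * (1 - (1-h)^(n-2)) / ((n:ℝ)-2))
      = ((n:ℝ)-2)/2 * Real.cos (γ + δ * Real.log (1-h))^2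
        + δ * (Real.sin (γ + δ * Real.log (1-h)) * Real.cos (γ + δ * Real.log (1-h))) := by
    calc a₁^2 * (1 - (1-h)^n) / (n:ℝ)
        - c * (a₁^2 * (1 - (1-h)^n) / (n:ℝ) + 2*a₁*b₁ * (1 - (1-h)^(n-1)) / ((n:ℝ)-1)
          + b₁^2 * (1 - (1-h)^(n-2)) / ((n:ℝ)-2))
        = (R1^2/h^2) * ((1 - (1-h)^n)/((n:ℝ))
            - c * ((1 - (1-h)^n)/((n:ℝ)) - 2*((1 - (1-h)^(n-1))/((n:ℝ)-1))
              + (1 - (1-h)^(n-2))/((n:ℝ)-2))) := by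
          rw [ha1def, hb1def]; ring
      _ = (R1^2/h^2) * ((h * (1-h)^(n-2) * fm n n h)
            - c * (h * (1-h)^(n-2) * fm n n h - 2*(h * (1-h)^(n-2) * fm n (n-1) h)
              + h * (1-h)^(n-2) * fm n (n-2) h)) := by
          rw [hf1, hf2, hf3]
      _ = (R1^2/h^2) * (h * (1-h)^(n-2)) * (fm n n h - c * gn n h) := by
          rw [gn]; ring
      _ = (R1^2/h^2) * (h * (1-h)^(n-2))
            * (h * (((n:ℝ)-2)/2
              + δ * (Real.sin (γ + δ * Real.log (1-h)) / Real.cos (γ + δ * Real.log (1-h))))) := by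
          rw [heq2']
      _ = (R1^2 * (1-h)^(n-2)) * (((n:ℝ)-2)/2
              + δ * (Real.sin (γ + δ * Real.log (1-h)) / Real.cos (γ + δ * Real.log (1-h)))) := by
          field_simp
      _ = Real.cos (γ + δ * Real.log (1-h))^2 * (((n:ℝ)-2)/2
              + δ * (Real.sin (γ + δ * Real.log (1-h)) / Real.cos (γ + δ * Real.log (1-h)))) := by
          rw [hR1sq]
      _ = ((n:ℝ)-2)/2 * Real.cos (γ + δ * Real.log (1-h))^2
          + δ * (Real.sin (γ + δ * Real.log (1-h)) * Real.cos (γ + δ * Real.log (1-h))) := by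
          field_simp
  -- the main integral identity
  have hNDeq : (∫ r in (0:ℝ)..1, r ^ (n-1) * (v' r)^2)
      = c * ∫ r in (0:ℝ)..1, r ^ (n-3) * (v r)^2 := by
    rw [hNsplit, hDsplit, hNL, hNM, hNR, hDL, hDM, hDR]
    linear_combination eqL + eqM + eqR
  -- FTC representation
  have hint0h : (∫ r in (0:ℝ)..h, v' r) = a * h := by
    rw [WhAux.int_congr h0le (g := fun _ => a) (fun r hr => hv'_left r hr.2),
      intervalIntegral.integral_const, smul_eq_mul]
    ring
  have hmidint : ∀ x : ℝ, h < x → x ≤ 1-h →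
      (∫ r in h..x, v' r) = WhAux.wF n δ γ x - WhAux.wF n δ γ h := by
    intro x hx1 hx2
    rw [WhAux.int_congr hx1.le (g := fun r => WhAux.wD n δ γ r)
      (fun r hr => hv'_mid r hr.1 (le_trans hr.2 hx2))]
    apply intervalIntegral.integral_eq_sub_of_hasDerivAt
    · intro y hy
      exact WhAux.hasDerivAt_wF n (Set.mem_Ioi.mp (WhAux.uIcc_sub_Ioi hh0 hx1.le hy)) δ γ
    · exact ((WhAux.contOn_wD n δ γ).mono (WhAux.uIcc_sub_Ioi hh0 hx1.le)).intervalIntegrable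
  have hv0 : v 0 = b := by rw [hv_left 0 h0le]; ring
  have hFTC : ∀ x ∈ Set.Icc (0:ℝ) 1, v x = v 0 + ∫ t in (0:ℝ)..x, v' t := by
    intro x hx
    rcases le_or_gt x h with hxh | hxh
    · rw [WhAux.int_congr hx.1 (g := fun _ => a) (fun r hr => hv'_left r (le_trans hr.2 hxh)),
        intervalIntegral.integral_const, smul_eq_mul, hv_left x hxh, hv0]
      ring
    · rcases le_or_gt x (1-h) with hx1h | hx1h
      · have hIx : IntervalIntegrable v' volume h x :=
          WhAux.II_congr hxh.le
            (((WhAux.contOn_wD n δ γ).mono (WhAux.uIcc_sub_Ioi hh0 hxh.le)).intervalIntegrable)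
            (fun r hr => hv'_mid r hr.1 (le_trans hr.2 hx1h))
        rw [← intervalIntegral.integral_add_adjacent_intervals hIv'1 hIx, hint0h,
          hmidint x hxh hx1h, hv_mid x hxh hx1h, hv0]
        linear_combination -hmatch1
      · have e1h : (∫ r in (0:ℝ)..(1-h), v' r)
            = a*h + (WhAux.wF n δ γ (1-h) - WhAux.wF n δ γ h) := by
          rw [← intervalIntegral.integral_add_adjacent_intervals hIv'1 hIv'2, hint0h,
            hmidint (1-h) hh1' (le_refl _)]
        have hIx : IntervalIntegrable v' volume (1-h) x :=
          WhAux.II_congr hx1h.le (intervalIntegrable_const (c := a₁))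
            (fun r hr => hv'_right r hr.1)
        rw [← intervalIntegral.integral_add_adjacent_intervals (hIv'1.trans hIv'2) hIx, e1h,
          WhAux.int_congr hx1h.le (g := fun _ => a₁) (fun r hr => hv'_right r hr.1),
          intervalIntegral.integral_const, smul_eq_mul, hv_right x hx1h, hv0]
        linear_combination hmatch2 - hmatch1
  -- continuity
  have hcont : ContinuousOn v (Set.Icc 0 1) := by
    have hIcc : Set.Icc (0:ℝ) 1 = Set.uIcc 0 1 := (uIcc_of_le zero_le_one).symm
    rw [hIcc]
    apply ContinuousOn.congr (continuousOn_const.add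
      (intervalIntegral.continuousOn_primitive_interval' hIv'01 left_mem_uIcc))
    intro x hx
    rw [← hIcc] at hx
    exact hFTC x hx
  -- square integrability of v'
  have hsqInt : IntegrableOn (fun t => v' t ^ 2) (Set.Ioo 0 1) volume := by
    have p1 : IntervalIntegrable (fun t => v' t ^ 2) volume 0 h :=
      WhAux.II_congr h0le (intervalIntegrable_const (c := a^2))
        (fun r hr => by rw [hv'_left r hr.2])
    have p2 : IntervalIntegrable (fun t => v' t ^ 2) volume h (1-h) :=
      WhAux.II_congr hhle
        ((((WhAux.contOn_wD n δ γ).mono (WhAux.uIcc_sub_Ioi hh0 hhle)).pow 2).intervalIntegrable)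
        (fun r hr => by rw [hv'_mid r hr.1 hr.2]; rfl)
    have p3 : IntervalIntegrable (fun t => v' t ^ 2) volume (1-h) 1 :=
      WhAux.II_congr h1hle1 (intervalIntegrable_const (c := a₁^2))
        (fun r hr => by rw [hv'_right r hr.1])
    have p := (p1.trans p2).trans p3
    rw [intervalIntegrable_iff, uIoc_of_le zero_le_one] at p
    exact p.mono_set Set.Ioo_subset_Ioc_self
  -- membership in W_h
  have hmem : MemWh h v v' := by
    refine ⟨⟨hcont, hIv'01, hsqInt, hFTC⟩, ?_, ⟨a, b, fun x hx => hv_left x hx.2⟩,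
      ⟨a₁, b₁, ?_⟩⟩
    · rw [hv_right 1 (by linarith), ha1def, hb1def]
      ring
    · intro x hx
      rcases eq_or_lt_of_le hx.1 with heqx | hltx
      · rw [← heqx, hv_mid (1-h) hh1' (le_refl _)]
        exact hmatch2.symm
      · exact hv_right x hltx
  -- nondegeneracy
  have hnz : ∃ x ∈ Set.Icc (0:ℝ) 1, v x ≠ 0 := by
    refine ⟨h, ⟨h0le, by linarith⟩, ?_⟩
    rw [hv_left h (le_refl h), hmatch1]
    have hwpos : 0 < WhAux.wF n δ γ h := by
      rw [WhAux.wF]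
      exact mul_pos (Real.rpow_pos_of_pos hh0 _) (by simpa [WhAux.θf] using hC0)
    exact ne_of_gt hwpos
  -- positivity of the denominator
  have hDMpos : 0 < ∫ r in h..(1-h), r ^ (n-3) * (v r)^2 := by
    rw [WhAux.int_congr hhle (g := fun r => r ^ (n-3) * (WhAux.wF n δ γ r)^2)
      (fun r hr => by rw [hv_mid r hr.1 hr.2])]
    apply intervalIntegral.intervalIntegral_pos_of_pos_on
    · exact ((continuous_pow (n-3)).continuousOn.mul
        (((WhAux.contOn_wF n δ γ).mono (WhAux.uIcc_sub_Ioi hh0 hhle)).pow 2)).intervalIntegrable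
    · intro x hx
      have hx0 : 0 < x := lt_trans hh0 hx.1
      have hw : 0 < WhAux.wF n δ γ x := by
        rw [WhAux.wF]
        refine mul_pos (Real.rpow_pos_of_pos hx0 _) ?_
        exact Real.cos_pos_of_mem_Ioo (by simpa [WhAux.θf] using hrange x ⟨hx.1.le, hx.2.le⟩)
      exact mul_pos (pow_pos hx0 _) (pow_pos hw 2)
    · exact hh1'
  have hDLnn : 0 ≤ ∫ r in (0:ℝ)..h, r ^ (n-3) * (v r)^2 :=
    intervalIntegral.integral_nonneg h0le
      (fun u hu => mul_nonneg (pow_nonneg hu.1 _) (sq_nonneg _))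
  have hDRnn : 0 ≤ ∫ r in (1-h)..1, r ^ (n-3) * (v r)^2 :=
    intervalIntegral.integral_nonneg h1hle1
      (fun u hu => mul_nonneg (pow_nonneg (le_trans h1h0.le hu.1) _) (sq_nonneg _))
  have hDpos : 0 < ∫ r in (0:ℝ)..1, r ^ (n-3) * (v r)^2 := by
    rw [hDsplit]
    linarith
  constructor
  · exact ⟨v, v', hmem, hnz, hNDeq⟩
  · unfold munh
    apply csInf_le
    · refine ⟨0, fun s hs => ?_⟩
      obtain ⟨w, w', _, _, rfl⟩ := hs
      apply div_nonneg
      · exact intervalIntegral.integral_nonneg zero_le_one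
          (fun u hu => mul_nonneg (pow_nonneg hu.1 _) (sq_nonneg _))
      · exact intervalIntegral.integral_nonneg zero_le_one
          (fun u hu => mul_nonneg (pow_nonneg hu.1 _) (sq_nonneg _))
    · exact ⟨v, v', hmem, hnz, by
        rw [hNDeq, mul_div_assoc, div_self (ne_of_gt hDpos), mul_one]⟩
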